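/- Let τ ∈ {0,1}^ℕ and let (y^L)_{L∈ℕ} be a family of alternating sequences in {A,B,C,D}^ℤ such that for every L ∈ ℕ there exists i_L ∈ ℤ with y^L = S^{i_L} φ_{τ_L}(y^{L+1}). Then y^0 ∈ Y_τ. -/

import Mathlib

open MeasureTheory Filter Topology
open scoped ENNReal

attribute [local instance] Classical.propDecidable

noncomputable section

/-- The shift map on bi-infinite sequences: `(S x) n = x (n+1)`. -/
def shift {α : Type*} (x : ℤ → α) : ℤ → α := fun n => x (n + 1)

/-- Shift by an arbitrary integer amount `m`. -/
def shiftZ {α : Type*} (m : ℤ) (x : ℤ → α) : ℤ → α := fun n => x (n + m)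

/-- A run structure on a bi-infinite sequence `x`: `t k` is the starting index of the
`k`-th maximal mono-symbol block of `x`, indexed so that block `0` contains position `0`. -/
structure RunStructure (x : ℤ → ℕ) where
  t : ℤ → ℤ
  mono : StrictMono t
  start_nonpos : t 0 ≤ 0
  start_pos : 0 < t 1
  const : ∀ k i : ℤ, t k ≤ i → i < t (k + 1) → x i = x (t k)
  alt : ∀ k : ℤ, x (t (k + 1)) ≠ x (t k)

/-- `d` is the run-length derivative of `x`: `d k` is the length of the `k`-th run. -/
def IsDelta (x d : ℤ → ℕ) : Prop :=
  ∃ r : RunStructure x, ∀ k : ℤ, (d k : ℤ) = r.t (k + 1) - r.t k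

/-- The run-length derivative operator `Δ` (junk value when no derivative exists). -/
def delta (x : ℤ → ℕ) : ℤ → ℕ :=
  if h : ∃ d, IsDelta x d then h.choose else fun _ => 0

/-- A bi-infinite sequence is smooth over `{1,3}` if all its iterated derivatives exist
and take values in `{1,3}`. -/
def SmoothSeq (x : ℤ → ℕ) : Prop :=
  ∀ k : ℕ, ∀ n : ℤ, delta^[k] x n = 1 ∨ delta^[k] x n = 3

/-- The set `X` of bi-infinite smooth sequences over `{1,3}`. -/
def SmoothX : Set (ℤ → ℕ) := {x | SmoothSeq x}

/-- The recoding alphabet: `A = 1`, `B = 3`, `C = 111`, `D = 333`. -/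
inductive ABCD : Type
  | A | B | C | D
deriving DecidableEq

instance : TopologicalSpace ABCD := ⊥
instance : DiscreteTopology ABCD := ⟨rfl⟩
instance : MeasurableSpace ABCD := ⊤

open ABCD

/-- The symbol (1 or 3) of the run encoded by a letter. -/
def sval : ABCD → ℕ
  | A => 1
  | B => 3
  | C => 1
  | D => 3

/-- The length (1 or 3) of the run encoded by a letter; this is also the value of `Δx`
at the corresponding position. -/
def lval : ABCD → ℕ
  | A => 1
  | B => 1
  | C => 3
  | D => 3

/-- `y` is the recoding of `x`: the letter `y k` encodes the `k`-th run of `x`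
(its symbol and its length). -/
def IsRecoding (x : ℤ → ℕ) (y : ℤ → ABCD) : Prop :=
  ∃ r : RunStructure x, ∀ k : ℤ,
    x (r.t k) = sval (y k) ∧ r.t (k + 1) - r.t k = (lval (y k) : ℤ)

/-- The recoding map `rec` (junk value when no recoding exists). -/
def recode (x : ℤ → ℕ) : ℤ → ABCD :=
  if h : ∃ y, IsRecoding x y then h.choose else fun _ => A

/-- The set `Y = rec(X)` of recodings of smooth sequences. -/
def SmoothY : Set (ℤ → ABCD) := recode '' SmoothX

/-- The derivative operator induced on recodings: since `(Δx) i = lval (rec x i)`,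
we have `Δ(rec x) = rec (Δ x) = recode (lval ∘ rec x)`. -/
def deltaY (y : ℤ → ABCD) : ℤ → ABCD := recode fun i => (lval (y i) : ℕ)

/-- `y` is well-aligned: the elementary block of `y` containing coordinate `0` starts
at position `0` (elementary blocks of `y` are exactly the runs of `Δx`, and
`(Δx) i = lval (y i)`). -/
def WellAligned (y : ℤ → ABCD) : Prop := lval (y (-1)) ≠ lval (y 0)

/-- `B_Y^L`: the set of `y ∈ Y` such that `y, Δy, ..., Δ^{L-1} y` are all well-aligned. -/
def BY (L : ℕ) : Set (ℤ → ABCD) :=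
  {y | y ∈ SmoothY ∧ ∀ l < L, WellAligned (deltaY^[l] y)}

/-- `Σ_y^L(n) = #{k ∈ [1,n] : S^k y ∈ B_Y^L}`. -/
def SigY (L : ℕ) (y : ℤ → ABCD) (n : ℕ) : ℕ :=
  ((Finset.Icc 1 n).filter fun k => shift^[k] y ∈ BY L).card

/-- `y` contains an elementary block in `{ABA, DCD}` (for `y ∈ Y`, any such factor is
automatically an elementary block). -/
def HasType0 (y : ℤ → ABCD) : Prop :=
  ∃ i : ℤ, (y i = A ∧ y (i + 1) = B ∧ y (i + 2) = A) ∨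
           (y i = D ∧ y (i + 1) = C ∧ y (i + 2) = D)

/-- `y` contains an elementary block in `{BAB, CDC}`. -/
def HasType1 (y : ℤ → ABCD) : Prop :=
  ∃ i : ℤ, (y i = B ∧ y (i + 1) = A ∧ y (i + 2) = B) ∨
           (y i = C ∧ y (i + 1) = D ∧ y (i + 2) = C)

/-- The type of a recoded sequence: `false` = type 0, `true` = type 1. -/
def typeOf (y : ℤ → ABCD) : Bool := decide (HasType1 y)

/-- The sequence of types of the successive derivatives of a smooth sequence `x`. -/
def TypesX (x : ℤ → ℕ) : ℕ → Bool := fun n => typeOf (recode (delta^[n] x))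

/-- The sequence of types of the successive derivatives of a recoded sequence `y`. -/
def TypesY (y : ℤ → ABCD) : ℕ → Bool := fun n => typeOf (deltaY^[n] y)

/-- `X_τ`: smooth bi-infinite sequences whose type sequence is exactly `τ`. -/
def Xset (τ : ℕ → Bool) : Set (ℤ → ℕ) := {x ∈ SmoothX | TypesX x = τ}

/-- `Y_τ = rec(X_τ)`. -/
def Yset (τ : ℕ → Bool) : Set (ℤ → ABCD) := recode '' Xset τ

/-- A sequence over `{A,B,C,D}` is alternating: no two consecutive symbols in `{A,C}`
and no two consecutive symbols in `{B,D}`. -/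
def Alternating (y : ℤ → ABCD) : Prop := ∀ n : ℤ, sval (y n) ≠ sval (y (n + 1))

/-- The substitutions `φ₀` and `φ₁` on letters. -/
def phiW : Bool → ABCD → List ABCD
  | false, A => [A]
  | false, B => [D]
  | false, C => [A, B, A]
  | false, D => [D, C, D]
  | true, A => [B]
  | true, B => [C]
  | true, C => [B, A, B]
  | true, D => [C, D, C]

/-- `z` is the image of the bi-infinite sequence `y` under the substitution `φ_t`, with
the convention that the image of the letter at position `0` starts at position `0`. -/
def IsSubst (t : Bool) (y z : ℤ → ABCD) : Prop :=
  ∃ u : ℤ → ℤ, u 0 = 0 ∧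
    (∀ k : ℤ, u (k + 1) = u k + (phiW t (y k)).length) ∧
    (∀ k : ℤ, ∀ j : Fin (phiW t (y k)).length, z (u k + (j : ℕ)) = (phiW t (y k)).get j)

/-- The substitution `φ_t` on bi-infinite sequences. -/
def substF (t : Bool) (y : ℤ → ABCD) : ℤ → ABCD :=
  if h : ∃ z, IsSubst t y z then h.choose else y

/-- The composition `φ_{τ₀} ∘ φ_{τ₁} ∘ ⋯ ∘ φ_{τ_{L-1}}`. -/
def substComp (τ : ℕ → Bool) : ℕ → (ℤ → ABCD) → (ℤ → ABCD)
  | 0 => id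
  | L + 1 => substF (τ 0) ∘ substComp (fun n => τ (n + 1)) L

/-- The homographies `h₀` and `h₁`. -/
def hmap : Bool → ℝ × ℝ → ℝ × ℝ
  | false, p => ((1 - p.1) / (3 - 2 * (p.1 + p.2)), (1 / 2 - p.1) / (3 - 2 * (p.1 + p.2)))
  | true, p => ((1 / 2 - p.1) / (3 - 2 * (p.1 + p.2)), (1 - p.1) / (3 - 2 * (p.1 + p.2)))

/-- The square `K = [0,1/2] × [0,1/2]`. -/
def Ksq : Set (ℝ × ℝ) := Set.Icc (0 : ℝ) (1 / 2) ×ˢ Set.Icc (0 : ℝ) (1 / 2)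

/-- The domain `E = {(a,b) ∈ K : a + b ≤ 3/4}`. -/
def Eset : Set (ℝ × ℝ) := {p ∈ Ksq | p.1 + p.2 ≤ 3 / 4}

/-- The composition `h_{t₀} ∘ h_{t₁} ∘ ⋯ ∘ h_{t_L}`. -/
def hComp (t : ℕ → Bool) : ℕ → (ℝ × ℝ → ℝ × ℝ)
  | 0 => hmap (t 0)
  | L + 1 => hComp t L ∘ hmap (t (L + 1))

/-- The point `(a(t), b(t))`, unique point of `⋂_L (h_{t₀} ∘ ⋯ ∘ h_{t_L})(E)`. -/
def abPoint (t : ℕ → Bool) : ℝ × ℝ :=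
  if h : ∃ p : ℝ × ℝ, (⋂ L : ℕ, hComp t L '' Eset) = {p} then h.choose else 0

/-- The number of occurrences of the letter `s` among positions `1, ..., m` of `z`. -/
def letterCount (s : ABCD) (z : ℤ → ABCD) (m : ℕ) : ℕ :=
  ((Finset.Icc 1 m).filter fun k => z (k : ℤ) = s).card

/-- `w` occurs as a factor of `y` at position `i`. -/
def IsFactorAt (w : List ABCD) (y : ℤ → ABCD) (i : ℤ) : Prop :=
  ∀ j : Fin w.length, y (i + (j : ℕ)) = w.get j

/-- The cylinder set `[w]` in `{1,3}^ℤ`. -/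
def cylX (w : List ℕ) : Set (ℤ → ℕ) :=
  {x | ∀ j : Fin w.length, x ((j : ℕ) : ℤ) = w.get j}

/-- The cylinder set `[w]` in `{A,B,C,D}^ℤ`. -/
def cylY (w : List ABCD) : Set (ℤ → ABCD) :=
  {y | ∀ j : Fin w.length, y ((j : ℕ) : ℤ) = w.get j}

/-- The number of occurrences of the finite word `w` in the prefix `x₀ ⋯ x_{n-1}`. -/
def occCount (x : ℤ → ℕ) (w : List ℕ) (n : ℕ) : ℕ :=
  ((Finset.range n).filter fun i =>
    i + w.length ≤ n ∧ ∀ j : Fin w.length, x (((i + (j : ℕ) : ℕ)) : ℤ) = w.get j).card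

/-- A subshift `Z` is minimal if it contains no nonempty proper closed shift-invariant
subset. -/
def ShiftMinimal {α : Type*} [TopologicalSpace α] (Z : Set (ℤ → α)) : Prop :=
  ∀ W : Set (ℤ → α), W ⊆ Z → W.Nonempty → IsClosed W → shift '' W = W → W = Z

namespace Stmt6Aux

open ABCD

lemma sval_mem (a : ABCD) : sval a = 1 ∨ sval a = 3 := by cases a <;> simp [sval]

lemma one_le_lval (a : ABCD) : 1 ≤ lval a := by cases a <;> simp [lval]

lemma letter_ext {a b : ABCD} (h1 : sval a = sval b) (h2 : lval a = lval b) : a = b := by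
  cases a <;> cases b <;> simp_all [sval, lval]

/-! ### Partial sums of lengths -/

def psum (ℓ : ℤ → ℕ) : ℤ → ℤ := fun k =>
  (∑ j ∈ Finset.range k.toNat, (ℓ (j : ℤ) : ℤ)) -
    ∑ j ∈ Finset.range (-k).toNat, (ℓ (-((j : ℤ) + 1)) : ℤ)

lemma psum_zero (ℓ : ℤ → ℕ) : psum ℓ 0 = 0 := by simp [psum]

lemma psum_succ (ℓ : ℤ → ℕ) (k : ℤ) : psum ℓ (k + 1) = psum ℓ k + ℓ k := by
  rcases le_or_gt 0 k with hk | hk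
  · have h1 : (k + 1).toNat = k.toNat + 1 := by omega
    have h2 : (-k).toNat = 0 := by omega
    have h3 : (-(k + 1)).toNat = 0 := by omega
    have h4 : (k.toNat : ℤ) = k := by omega
    simp only [psum, h1, h2, h3, Finset.sum_range_succ, Finset.range_zero,
      Finset.sum_empty, h4]
    ring
  · have h1 : (k + 1).toNat = 0 := by omega
    have h2 : k.toNat = 0 := by omega
    have h3 : (-k).toNat = (-(k + 1)).toNat + 1 := by omega
    have h4 : -((((-(k + 1)).toNat : ℤ)) + 1) = k := by omega
    simp only [psum, h1, h2, h3, Finset.sum_range_succ, h4, Finset.range_zero,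
      Finset.sum_empty]
    ring

lemma psum_strictMono {ℓ : ℤ → ℕ} (hℓ : ∀ k, 1 ≤ ℓ k) : StrictMono (psum ℓ) :=
  strictMono_int_of_lt_succ fun k => by have := hℓ k; rw [psum_succ]; omega

lemma strictMono_add_nat {f : ℤ → ℤ} (hf : StrictMono f) (a : ℤ) (n : ℕ) :
    f a + n ≤ f (a + n) := by
  induction n with
  | zero => simp
  | succ n ih =>
      have h : f (a + n) < f (a + n + 1) := hf (by omega)
      have e : a + ((n + 1 : ℕ) : ℤ) = a + n + 1 := by push_cast; ring
      rw [e]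
      push_cast
      push_cast at ih
      omega

lemma exists_floor {f : ℤ → ℤ} (hf : StrictMono f) (n : ℤ) :
    ∃ k, f k ≤ n ∧ n < f (k + 1) := by
  have hbdd : ∃ b : ℤ, ∀ z : ℤ, f z ≤ n → z ≤ b := by
    refine ⟨max 0 (n - f 0), fun z hz => ?_⟩
    rcases le_or_gt z 0 with h | h
    · exact h.trans (le_max_left _ _)
    · have h2 := strictMono_add_nat hf 0 z.toNat
      have h3 : (0 : ℤ) + (z.toNat : ℤ) = z := by omega
      rw [h3] at h2
      refine le_trans ?_ (le_max_right _ _)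
      omega
  have hinh : ∃ z : ℤ, f z ≤ n := by
    refine ⟨-(((f 0 - n).toNat : ℤ)), ?_⟩
    have h2 := strictMono_add_nat hf (-(((f 0 - n).toNat : ℤ))) (f 0 - n).toNat
    have h3 : -(((f 0 - n).toNat : ℤ)) + ((f 0 - n).toNat : ℤ) = 0 := by ring
    rw [h3] at h2
    omega
  obtain ⟨k, hk, hmax⟩ := Int.exists_greatest_of_bdd hbdd hinh
  refine ⟨k, hk, ?_⟩
  by_contra h
  push_neg at h
  have := hmax (k + 1) h
  omega

lemma floor_unique {f : ℤ → ℤ} (hf : StrictMono f) {k k' n : ℤ}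
    (h1 : f k ≤ n) (h2 : n < f (k + 1)) (h3 : f k' ≤ n) (h4 : n < f (k' + 1)) : k = k' := by
  by_contra h
  rcases lt_or_gt_of_ne h with hlt | hlt
  · have := hf.monotone (show k + 1 ≤ k' by omega); omega
  · have := hf.monotone (show k' + 1 ≤ k by omega); omega

def kap (ℓ : ℤ → ℕ) (n : ℤ) : ℤ :=
  if h : ∃ k, psum ℓ k ≤ n ∧ n < psum ℓ (k + 1) then h.choose else 0

lemma kap_spec {ℓ : ℤ → ℕ} (hℓ : ∀ k, 1 ≤ ℓ k) (n : ℤ) :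
    psum ℓ (kap ℓ n) ≤ n ∧ n < psum ℓ (kap ℓ n + 1) := by
  have h := exists_floor (psum_strictMono hℓ) n
  rw [kap, dif_pos h]
  exact h.choose_spec

lemma kap_eq {ℓ : ℤ → ℕ} (hℓ : ∀ k, 1 ≤ ℓ k) {k n : ℤ}
    (h1 : psum ℓ k ≤ n) (h2 : n < psum ℓ (k + 1)) : kap ℓ n = k :=
  floor_unique (psum_strictMono hℓ) (kap_spec hℓ n).1 (kap_spec hℓ n).2 h1 h2

lemma kap_psum {ℓ : ℤ → ℕ} (hℓ : ∀ k, 1 ≤ ℓ k) (k : ℤ) : kap ℓ (psum ℓ k) = k :=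
  kap_eq hℓ le_rfl (by rw [psum_succ]; have := hℓ k; omega)

/-! ### Expansion of a recoded sequence -/

def lv (y : ℤ → ABCD) : ℤ → ℕ := fun k => lval (y k)

lemma one_le_lv (y : ℤ → ABCD) : ∀ k, 1 ≤ lv y k := fun _ => one_le_lval _

def expandSeq (y : ℤ → ABCD) : ℤ → ℕ := fun n => sval (y (kap (lv y) n))

lemma expandSeq_mem (y : ℤ → ABCD) (n : ℤ) : expandSeq y n = 1 ∨ expandSeq y n = 3 :=
  sval_mem _

def runStruct (y : ℤ → ABCD) (ha : Alternating y) (m : ℤ) :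
    RunStructure (shiftZ m (expandSeq y)) where
  t := fun k => psum (lv y) (k + kap (lv y) m) - m
  mono := by
    intro a b hab
    have h := psum_strictMono (one_le_lv y)
      (show a + kap (lv y) m < b + kap (lv y) m by omega)
    show psum (lv y) (a + kap (lv y) m) - m < psum (lv y) (b + kap (lv y) m) - m
    omega
  start_nonpos := by
    have := (kap_spec (one_le_lv y) m).1
    simpa using this
  start_pos := by
    have := (kap_spec (one_le_lv y) m).2
    have e : (1 : ℤ) + kap (lv y) m = kap (lv y) m + 1 := by ring
    simp only [e]
    omega
  const := by
    intro k i h1 h2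
    have h1' : psum (lv y) (k + kap (lv y) m) - m ≤ i := h1
    have h2' : i < psum (lv y) (k + 1 + kap (lv y) m) - m := h2
    have e : k + 1 + kap (lv y) m = k + kap (lv y) m + 1 := by ring
    rw [e] at h2'
    have e1 : kap (lv y) (i + m) = k + kap (lv y) m :=
      kap_eq (one_le_lv y) (by omega) (by omega)
    have e3 : psum (lv y) (k + kap (lv y) m) - m + m = psum (lv y) (k + kap (lv y) m) := by
      ring
    show expandSeq y (i + m) = expandSeq y (psum (lv y) (k + kap (lv y) m) - m + m)
    simp only [expandSeq, e3, e1, kap_psum (one_le_lv y)]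
  alt := by
    intro k
    have e3 : psum (lv y) (k + kap (lv y) m) - m + m = psum (lv y) (k + kap (lv y) m) := by
      ring
    have e4 : psum (lv y) (k + 1 + kap (lv y) m) - m + m =
        psum (lv y) (k + 1 + kap (lv y) m) := by ring
    show expandSeq y (psum (lv y) (k + 1 + kap (lv y) m) - m + m) ≠
      expandSeq y (psum (lv y) (k + kap (lv y) m) - m + m)
    simp only [expandSeq, e3, e4, kap_psum (one_le_lv y)]
    have := ha (k + kap (lv y) m)
    have e5 : k + kap (lv y) m + 1 = k + 1 + kap (lv y) m := by ring
    rw [e5] at this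
    exact fun h => this h.symm

lemma isDelta_shift_expand (y : ℤ → ABCD) (ha : Alternating y) (m : ℤ) :
    IsDelta (shiftZ m (expandSeq y)) (fun k => lval (y (k + kap (lv y) m))) := by
  refine ⟨runStruct y ha m, fun k => ?_⟩
  show (lval (y (k + kap (lv y) m)) : ℤ) =
    (psum (lv y) (k + 1 + kap (lv y) m) - m) - (psum (lv y) (k + kap (lv y) m) - m)
  have e : k + 1 + kap (lv y) m = k + kap (lv y) m + 1 := by ring
  rw [e, psum_succ]
  show ((lv y (k + kap (lv y) m) : ℤ)) = _
  ring

/-! ### Uniqueness of run structures -/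

section Runs

variable {x : ℤ → ℕ}

lemma run_cp (r : RunStructure x) (k : ℤ) : x (r.t k - 1) ≠ x (r.t k) := by
  have h1 : r.t (k - 1) ≤ r.t k - 1 := by
    have := r.mono (show k - 1 < k by omega); omega
  have e : k - 1 + 1 = k := by ring
  have h2 : r.t k - 1 < r.t (k - 1 + 1) := by rw [e]; omega
  have h3 := r.const (k - 1) (r.t k - 1) h1 h2
  have h4 := r.alt (k - 1)
  rw [e] at h4
  rw [h3]
  exact fun h => h4 h.symm

lemma run_nocp (r : RunStructure x) {k i : ℤ} (h1 : r.t k < i) (h2 : i < r.t (k + 1)) :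
    x (i - 1) = x i := by
  have ha := r.const k i (le_of_lt h1) h2
  have hb := r.const k (i - 1) (by omega) (by omega)
  rw [ha, hb]

lemma run_next (r r' : RunStructure x) {k j : ℤ} (h : r'.t j = r.t k) :
    r'.t (j + 1) = r.t (k + 1) := by
  have hcp := run_cp r (k + 1)
  have hcp' := run_cp r' (j + 1)
  have hj1 : r'.t j < r'.t (j + 1) := r'.mono (by omega)
  have hk1 : r.t k < r.t (k + 1) := r.mono (by omega)
  rcases lt_trichotomy (r'.t (j + 1)) (r.t (k + 1)) with h1 | h1 | h1
  · exact absurd (run_nocp r (by omega) h1) hcp'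
  · exact h1
  · exact absurd (run_nocp r' (by omega) h1) hcp

lemma run_prev (r r' : RunStructure x) {k j : ℤ} (h : r'.t j = r.t k) :
    r'.t (j - 1) = r.t (k - 1) := by
  have hcp := run_cp r (k - 1)
  have hcp' := run_cp r' (j - 1)
  have ej : j - 1 + 1 = j := by ring
  have ek : k - 1 + 1 = k := by ring
  have hj1 : r'.t (j - 1) < r'.t j := r'.mono (by omega)
  have hk1 : r.t (k - 1) < r.t k := r.mono (by omega)
  rcases lt_trichotomy (r'.t (j - 1)) (r.t (k - 1)) with h1 | h1 | h1
  · have h2 : r.t (k - 1) < r'.t (j - 1 + 1) := by rw [ej, h]; omega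
    exact absurd (run_nocp r' h1 h2) hcp
  · exact h1
  · have h2 : r'.t (j - 1) < r.t (k - 1 + 1) := by rw [ek, ← h]; omega
    exact absurd (run_nocp r h1 h2) hcp'

lemma run_t_eq (r r' : RunStructure x) : ∀ k, r.t k = r'.t k := by
  have h0 : r'.t 0 = r.t 0 := by
    obtain ⟨j, hj1, hj2⟩ := exists_floor r'.mono (r.t 0)
    have hj : r'.t j = r.t 0 := by
      rcases eq_or_lt_of_le hj1 with h | h
      · exact h
      · exact absurd (run_nocp r' h hj2) (run_cp r 0)
    have hnext := run_next r r' hj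
    have e01 : (0 : ℤ) + 1 = 1 := by norm_num
    rw [e01] at hnext
    have hj0 : j = 0 := by
      by_contra hne
      rcases lt_or_gt_of_ne hne with hlt | hlt
      · have h5 : r'.t (j + 1) ≤ r'.t 0 := r'.mono.monotone (by omega)
        have h6 := r'.start_nonpos
        have h7 := r.start_pos
        omega
      · have h5 : r'.t 1 ≤ r'.t j := r'.mono.monotone (by omega)
        have h6 := r'.start_pos
        have h7 := r.start_nonpos
        omega
    rw [hj0] at hj
    exact hj
  intro k
  induction k using Int.induction_on with
  | zero => exact h0.symm
  | succ n ih => exact (run_next r r' ih.symm).symm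
  | pred n ih => exact (run_prev r r' ih.symm).symm

end Runs

lemma isDelta_unique {x : ℤ → ℕ} {d d' : ℤ → ℕ} (h : IsDelta x d) (h' : IsDelta x d') :
    d = d' := by
  obtain ⟨r, hr⟩ := h
  obtain ⟨r', hr'⟩ := h'
  funext k
  have ht := run_t_eq r r'
  have : (d k : ℤ) = (d' k : ℤ) := by rw [hr k, hr' k, ht k, ht (k + 1)]
  exact_mod_cast this

lemma delta_eq {x : ℤ → ℕ} {d : ℤ → ℕ} (h : IsDelta x d) : delta x = d := by
  have h' : ∃ d, IsDelta x d := ⟨d, h⟩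
  rw [delta, dif_pos h']
  exact isDelta_unique h'.choose_spec h

lemma isRecoding_unique {x : ℤ → ℕ} {y y' : ℤ → ABCD}
    (h : IsRecoding x y) (h' : IsRecoding x y') : y = y' := by
  obtain ⟨r, hr⟩ := h
  obtain ⟨r', hr'⟩ := h'
  funext k
  have ht := run_t_eq r r'
  refine letter_ext ?_ ?_
  · have a1 := (hr k).1
    have a2 := (hr' k).1
    rw [← a1, ← a2, ht k]
  · have a1 := (hr k).2
    have a2 := (hr' k).2
    have : (lval (y k) : ℤ) = (lval (y' k) : ℤ) := by
      rw [← a1, ← a2, ht k, ht (k + 1)]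
    exact_mod_cast this

lemma recode_eq {x : ℤ → ℕ} {y : ℤ → ABCD} (h : IsRecoding x y) : recode x = y := by
  have h' : ∃ y, IsRecoding x y := ⟨y, h⟩
  rw [recode, dif_pos h']
  exact isRecoding_unique h'.choose_spec h

lemma isRecoding_shift_expand (y : ℤ → ABCD) (ha : Alternating y) (m : ℤ) :
    IsRecoding (shiftZ m (expandSeq y)) (fun k => y (k + kap (lv y) m)) := by
  refine ⟨runStruct y ha m, fun k => ⟨?_, ?_⟩⟩
  · show expandSeq y (psum (lv y) (k + kap (lv y) m) - m + m) = _
    have e3 : psum (lv y) (k + kap (lv y) m) - m + m = psum (lv y) (k + kap (lv y) m) := by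
      ring
    simp only [expandSeq, e3, kap_psum (one_le_lv y)]
  · show (psum (lv y) (k + 1 + kap (lv y) m) - m) - (psum (lv y) (k + kap (lv y) m) - m) = _
    have e : k + 1 + kap (lv y) m = k + kap (lv y) m + 1 := by ring
    rw [e, psum_succ]
    show psum (lv y) (k + kap (lv y) m) + ((lv y (k + kap (lv y) m) : ℤ)) - m -
      (psum (lv y) (k + kap (lv y) m) - m) = ((lv y (k + kap (lv y) m) : ℤ))
    ring

/-! ### The canonical substitution image -/

def lenW (t : Bool) (y : ℤ → ABCD) : ℤ → ℕ := fun k => (phiW t (y k)).length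

lemma lenW_eq_lv (t : Bool) (y : ℤ → ABCD) : lenW t y = lv y := by
  funext k
  show (phiW t (y k)).length = lval (y k)
  cases t <;> cases y k <;> rfl

lemma one_le_lenW (t : Bool) (y : ℤ → ABCD) : ∀ k, 1 ≤ lenW t y k := by
  intro k
  rw [lenW_eq_lv]
  exact one_le_lv y k

def canonSubst (t : Bool) (y : ℤ → ABCD) : ℤ → ABCD := fun n =>
  (phiW t (y (kap (lenW t y) n))).getD (n - psum (lenW t y) (kap (lenW t y) n)).toNat A

lemma canon_apply (t : Bool) (y : ℤ → ABCD) (k : ℤ) {j : ℕ} (hj : j < lenW t y k) :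
    canonSubst t y (psum (lenW t y) k + j) = (phiW t (y k)).getD j A := by
  have hk : kap (lenW t y) (psum (lenW t y) k + j) = k :=
    kap_eq (one_le_lenW t y) (by omega) (by rw [psum_succ]; omega)
  show (phiW t (y (kap (lenW t y) (psum (lenW t y) k + j)))).getD
    ((psum (lenW t y) k + j - psum (lenW t y) (kap (lenW t y) (psum (lenW t y) k + j))).toNat)
    A = _
  rw [hk]
  congr 1
  omega

lemma isSubst_canon (t : Bool) (y : ℤ → ABCD) : IsSubst t y (canonSubst t y) := by
  refine ⟨psum (lenW t y), psum_zero _, fun k => psum_succ _ _, fun k j => ?_⟩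
  have hj : (j : ℕ) < lenW t y k := j.isLt
  have := canon_apply t y k hj
  rw [this]
  exact List.getD_eq_getElem _ _ j.isLt

lemma eq_psum {ℓ : ℤ → ℕ} {u : ℤ → ℤ} (h0 : u 0 = 0)
    (hs : ∀ k, u (k + 1) = u k + ℓ k) : u = psum ℓ := by
  funext k
  induction k using Int.induction_on with
  | zero => rw [h0, psum_zero]
  | succ n ih => rw [hs, psum_succ, ih]
  | pred n ih =>
      have h1 := hs (-(n : ℤ) - 1)
      have e : -(n : ℤ) - 1 + 1 = -(n : ℤ) := by ring
      rw [e] at h1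
      have h2 := psum_succ ℓ (-(n : ℤ) - 1)
      rw [e] at h2
      omega

lemma isSubst_unique {t : Bool} {y z z' : ℤ → ABCD}
    (h : IsSubst t y z) (h' : IsSubst t y z') : z = z' := by
  obtain ⟨u, hu0, hus, hz⟩ := h
  obtain ⟨u', hu0', hus', hz'⟩ := h'
  have heq : u = psum (lenW t y) := eq_psum hu0 hus
  have heq' : u' = psum (lenW t y) := eq_psum hu0' hus'
  funext n
  have hsp := kap_spec (one_le_lenW t y) n
  set k := kap (lenW t y) n with hk
  have hps := psum_succ (lenW t y) k
  have hjlt : (n - psum (lenW t y) k).toNat < (phiW t (y k)).length := by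
    show (n - psum (lenW t y) k).toNat < lenW t y k
    omega
  have hn1 : u k + (((n - psum (lenW t y) k).toNat : ℕ) : ℤ) = n := by
    rw [heq]; omega
  have hn2 : u' k + (((n - psum (lenW t y) k).toNat : ℕ) : ℤ) = n := by
    rw [heq']; omega
  have e1 := hz k ⟨_, hjlt⟩
  have e2 := hz' k ⟨_, hjlt⟩
  simp only at e1 e2
  rw [hn1] at e1
  rw [hn2] at e2
  rw [e1, e2]

lemma substF_eq (t : Bool) (y : ℤ → ABCD) : substF t y = canonSubst t y := by
  have h : ∃ z, IsSubst t y z := ⟨_, isSubst_canon t y⟩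
  rw [substF, dif_pos h]
  exact isSubst_unique h.choose_spec (isSubst_canon t y)

lemma lval_phi_getD (t : Bool) (a : ABCD) {j : ℕ} (hj : j < (phiW t a).length) :
    lval ((phiW t a).getD j A) = sval a := by
  cases t <;> cases a <;> simp only [phiW, List.length_cons, List.length_nil] at hj <;>
    interval_cases j <;> rfl

lemma lval_canon (t : Bool) (y : ℤ → ABCD) (n : ℤ) :
    lval (canonSubst t y n) = expandSeq y n := by
  have hsp := kap_spec (one_le_lenW t y) n
  have hps := psum_succ (lenW t y) (kap (lenW t y) n)
  have hjlt : (n - psum (lenW t y) (kap (lenW t y) n)).toNat <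
      (phiW t (y (kap (lenW t y) n))).length := by
    show _ < lenW t y (kap (lenW t y) n)
    omega
  show lval ((phiW t (y (kap (lenW t y) n))).getD
    (n - psum (lenW t y) (kap (lenW t y) n)).toNat A) = expandSeq y n
  rw [lval_phi_getD t _ hjlt]
  show _ = sval (y (kap (lv y) n))
  rw [← lenW_eq_lv t y]

/-! ### Type computations -/

lemma canon_head (t : Bool) (y : ℤ → ABCD) (k : ℤ) :
    canonSubst t y (psum (lenW t y) k) = (phiW t (y k)).getD 0 A := by
  have := canon_apply t y k (j := 0) (one_le_lenW t y k)
  simpa using this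

lemma canon_false_head (y : ℤ → ABCD) (k : ℤ) :
    canonSubst false y (psum (lenW false y) k) = A ∨
      canonSubst false y (psum (lenW false y) k) = D := by
  rw [canon_head]
  cases y k <;> simp [phiW]

lemma phi_false_BC {a : ABCD} {j : ℕ} (hj : j < (phiW false a).length)
    (h : (phiW false a).getD j A = B ∨ (phiW false a).getD j A = C) :
    (phiW false a).length = 3 ∧ j = 1 := by
  cases a <;> simp only [phiW, List.length_cons, List.length_nil] at hj ⊢ <;>
    interval_cases j <;> simp [phiW] at h ⊢

lemma canon_false_BC {y : ℤ → ABCD} {n : ℤ}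
    (h : canonSubst false y n = B ∨ canonSubst false y n = C) :
    n + 2 = psum (lenW false y) (kap (lenW false y) n + 1) := by
  have hsp := kap_spec (one_le_lenW false y) n
  set k := kap (lenW false y) n with hkdef
  have hps := psum_succ (lenW false y) k
  have hform : canonSubst false y n =
      (phiW false (y k)).getD (n - psum (lenW false y) k).toNat A := rfl
  set j := (n - psum (lenW false y) k).toNat with hjdef
  have hjlt : j < lenW false y k := by omega
  have hn : n = psum (lenW false y) k + j := by omega
  rw [hform] at h
  have hjlt' : j < (phiW false (y k)).length := hjlt
  have key := phi_false_BC hjlt' h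
  have hlen3 : lenW false y k = 3 := key.1
  have hj1 : j = 1 := key.2
  omega

lemma not_hasType1_false (y : ℤ → ABCD) : ¬ HasType1 (substF false y) := by
  rw [substF_eq]
  rintro ⟨p, h⟩
  have hBC : canonSubst false y p = B ∨ canonSubst false y p = C := by
    rcases h with ⟨h1, _, _⟩ | ⟨h1, _, _⟩
    · exact Or.inl h1
    · exact Or.inr h1
  have hpos := canon_false_BC hBC
  have hhead := canon_false_head y (kap (lenW false y) p + 1)
  rw [← hpos] at hhead
  rcases h with ⟨_, _, h3⟩ | ⟨_, _, h3⟩ <;> rw [h3] at hhead <;> simp at hhead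

lemma hasType1_true {y : ℤ → ABCD} {n : ℤ} (h : y n = C ∨ y n = D) :
    HasType1 (substF true y) := by
  rw [substF_eq]
  have hlen : lenW true y n = 3 := by
    rcases h with h | h <;> simp [lenW, h, phiW]
  have h0 := canon_apply true y n (j := 0) (by omega)
  have h1 := canon_apply true y n (j := 1) (by omega)
  have h2 := canon_apply true y n (j := 2) (by omega)
  refine ⟨psum (lenW true y) n, ?_⟩
  have e1 : psum (lenW true y) n + 1 = psum (lenW true y) n + ((1 : ℕ) : ℤ) := by norm_num
  have e2 : psum (lenW true y) n + 2 = psum (lenW true y) n + ((2 : ℕ) : ℤ) := by norm_num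
  rcases h with h | h
  · left
    refine ⟨by simpa [h, phiW] using h0, ?_, ?_⟩
    · rw [e1]; simpa [h, phiW] using h1
    · rw [e2]; simpa [h, phiW] using h2
  · right
    refine ⟨by simpa [h, phiW] using h0, ?_, ?_⟩
    · rw [e1]; simpa [h, phiW] using h1
    · rw [e2]; simpa [h, phiW] using h2

lemma sval_eq3 {a : ABCD} (h : sval a = 3) : a = B ∨ a = D := by
  cases a <;> simp_all [sval]

lemma exists_CD (t : Bool) (w : ℤ → ABCD) (hw : Alternating w) :
    ∃ n, substF t w n = C ∨ substF t w n = D := by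
  have h3 : ∃ k, w k = B ∨ w k = D := by
    have h := hw 0
    rcases sval_mem (w 0) with h0 | h0
    · rcases sval_mem (w (0 + 1)) with h1 | h1
      · exact absurd (h0.trans h1.symm) h
      · exact ⟨0 + 1, sval_eq3 h1⟩
    · exact ⟨0, sval_eq3 h0⟩
  obtain ⟨k, hk⟩ := h3
  refine ⟨psum (lenW t w) k, ?_⟩
  rw [substF_eq, canon_head]
  cases t <;> rcases hk with h | h <;> simp [phiW, h]

lemma hasType1_shiftZ (m : ℤ) (y : ℤ → ABCD) : HasType1 (shiftZ m y) ↔ HasType1 y := by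
  constructor
  · rintro ⟨i, h⟩
    refine ⟨i + m, ?_⟩
    have e1 : i + 1 + m = i + m + 1 := by ring
    have e2 : i + 2 + m = i + m + 2 := by ring
    simpa [shiftZ, e1, e2] using h
  · rintro ⟨i, h⟩
    refine ⟨i - m, ?_⟩
    have e0 : i - m + m = i := by ring
    have e1 : i - m + 1 + m = i + 1 := by ring
    have e2 : i - m + 2 + m = i + 2 := by ring
    simpa [shiftZ, e0, e1, e2] using h

lemma typeOf_shiftZ (m : ℤ) (y : ℤ → ABCD) : typeOf (shiftZ m y) = typeOf y := by
  unfold typeOf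
  exact decide_eq_decide.mpr (hasType1_shiftZ m y)

end Stmt6Aux

open Stmt6Aux in
/-- Elements of `Y_τ` from towers of substitutions.
If `(y^L)` is a family of alternating sequences with `y^L = S^{i_L} φ_{τ_L}(y^{L+1})`
for all `L`, then `y^0 ∈ Y_τ`. -/
theorem stmt6 (τ : ℕ → Bool) (ys : ℕ → ℤ → ABCD)
    (halt : ∀ L : ℕ, Alternating (ys L))
    (hsub : ∀ L : ℕ, ∃ i : ℤ, ys L = shiftZ i (substF (τ L) (ys (L + 1)))) :
    ys 0 ∈ Yset τ := by
  classical
  have hCD : ∀ L : ℕ, ∃ n, ys (L + 1) n = C ∨ ys (L + 1) n = D := by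
    intro L
    obtain ⟨i, hi⟩ := hsub (L + 1)
    obtain ⟨n, hn⟩ := exists_CD (τ (L + 1)) (ys (L + 2)) (halt (L + 2))
    refine ⟨n - i, ?_⟩
    rw [hi]
    have e : n - i + i = n := by ring
    show substF (τ (L + 1)) (ys (L + 2)) (n - i + i) = C ∨
      substF (τ (L + 1)) (ys (L + 2)) (n - i + i) = D
    rw [e]
    exact hn
  have htype : ∀ L : ℕ, typeOf (ys L) = τ L := by
    intro L
    obtain ⟨i, hi⟩ := hsub L
    rw [hi, typeOf_shiftZ]
    cases hτ : τ L
    · exact decide_eq_false (not_hasType1_false (ys (L + 1)))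
    · obtain ⟨n, hn⟩ := hCD L
      exact decide_eq_true (hasType1_true hn)
  have key : ∀ n : ℕ, ∃ m : ℤ,
      delta^[n] (expandSeq (ys 0)) = shiftZ m (expandSeq (ys n)) := by
    intro n
    induction n with
    | zero => exact ⟨0, by funext k; simp [shiftZ]⟩
    | succ n ih =>
        obtain ⟨m, hm⟩ := ih
        obtain ⟨i, hi⟩ := hsub n
        set c := kap (lv (ys n)) m with hc
        refine ⟨c + i, ?_⟩
        rw [Function.iterate_succ_apply', hm,
          delta_eq (isDelta_shift_expand (ys n) (halt n) m)]
        funext k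
        show lval (ys n (k + c)) = expandSeq (ys (n + 1)) (k + (c + i))
        rw [hi]
        show lval (substF (τ n) (ys (n + 1)) (k + c + i)) = _
        rw [substF_eq, lval_canon]
        have e : k + c + i = k + (c + i) := by ring
        rw [e]
  have hsmooth : SmoothSeq (expandSeq (ys 0)) := by
    intro k n
    obtain ⟨m, hm⟩ := key k
    rw [hm]
    exact expandSeq_mem (ys k) (n + m)
  have htypes : TypesX (expandSeq (ys 0)) = τ := by
    funext n
    obtain ⟨m, hm⟩ := key n
    show typeOf (recode (delta^[n] (expandSeq (ys 0)))) = τ n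
    rw [hm, recode_eq (isRecoding_shift_expand (ys n) (halt n) m)]
    have e : (fun k => ys n (k + kap (lv (ys n)) m)) =
        shiftZ (kap (lv (ys n)) m) (ys n) := rfl
    rw [e, typeOf_shiftZ]
    exact htype n
  have hrec : recode (expandSeq (ys 0)) = ys 0 := by
    have h0 : expandSeq (ys 0) = shiftZ 0 (expandSeq (ys 0)) := by
      funext k; simp [shiftZ]
    rw [h0, recode_eq (isRecoding_shift_expand (ys 0) (halt 0) 0)]
    have hk0 : kap (lv (ys 0)) 0 = 0 :=
      kap_eq (one_le_lv (ys 0)) (le_of_eq (psum_zero _))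
        (by rw [psum_succ, psum_zero]; have := one_le_lv (ys 0) 0; omega)
    funext k
    simp [hk0]
  exact ⟨expandSeq (ys 0), ⟨hsmooth, htypes⟩, hrec⟩
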